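/- Let G be a graph, S ⊆ E(G), O_S a b-orientation on G − S (b = 0 or 1), and γ : G → H = G/S₀ a contraction such that no edge of S₀ is O_S-bioriented. Then γ_* O_S is a b-orientation on H − γ_* S and: (a) if O_S ∈ O^b(G−S) then γ_* O_S ∈ O^b(H − γ_* S); (b) if δ : H → J is a contraction then (δ ∘ γ)_* O_S = δ_* γ_* O_S; (c) γ_*(d^{O_S}) = d^{γ_* O_S} − c^{γ,S}; (d) if O'_S is a b-orientation on G − S with O'_S ∼ O_S then γ_* O'_S ∼ γ_* O_S; (e) if O_T is a b-orientation on G − T with O_S ≤ O_T then γ_* O_S ≤ γ_* O_T. -/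

import Mathlib

/-!
Common framework: finite vertex-weighted multigraphs (loops and multiple edges
allowed), generalized orientations, divisors, contractions, and poset gadgets.

A graph is encoded by a finite set `V ⊆ ℕ` of vertices, a finite set `E ⊆ ℕ`
of edges, an "ends" function assigning to each edge its ordered pair of
end-vertices (the two components encode the two half-edges), and a weight
function `w : ℕ → ℕ`.

A generalized orientation is a function `ℕ → Option EdgeDir`, where `none`
means the edge is absent (an orientation on a spanning subgraph `G − S` takes
the value `none` exactly on edges outside `E \ S`), `fwd`/`bwd` give the edge a
single direction, and `bi` makes the edge bioriented.
-/

open scoped Classical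
open Finset

/-- Direction of an edge under a generalized orientation. -/
inductive EdgeDir : Type
  | fwd
  | bwd
  | bi
deriving DecidableEq

/-- Generalized orientation data. -/
abbrev Orient : Type := ℕ → Option EdgeDir

/-- The number of ending (target) half-edges at the vertex `v` of an edge with
end-pair `p`, given its direction `d`.  A one-way oriented edge has exactly
one target end; a bioriented edge has both ends as targets. -/
def dirT : Option EdgeDir → ℕ × ℕ → ℕ → ℕ
  | none, _, _ => 0
  | some EdgeDir.fwd, p, v => if p.2 = v then 1 else 0
  | some EdgeDir.bwd, p, v => if p.1 = v then 1 else 0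
  | some EdgeDir.bi, p, v => (if p.1 = v then 1 else 0) + (if p.2 = v then 1 else 0)

/-- Restriction of orientation data to the set `D` of kept edges. -/
def restr (O : Orient) (D : Finset ℕ) : Orient := fun e => if e ∈ D then O e else none

/-- A finite vertex-weighted multigraph. -/
structure MGraph : Type where
  V : Finset ℕ
  E : Finset ℕ
  ends : ℕ → ℕ × ℕ
  w : ℕ → ℕ
  ends_mem : ∀ e ∈ E, (ends e).1 ∈ V ∧ (ends e).2 ∈ V

namespace MGraph

variable (G : MGraph)

/-- Edge set of the induced subgraph `(G−S)[Z]`: edges of `G − S` with both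
ends in `Z`. -/
def indEdges (S Z : Finset ℕ) : Finset ℕ :=
  (G.E \ S).filter fun e => (G.ends e).1 ∈ Z ∧ (G.ends e).2 ∈ Z

/-- The cut `E(Z, Zᶜ)` in `G − S`: edges of `G − S` with exactly one end in `Z`. -/
def cutEdges (S Z : Finset ℕ) : Finset ℕ :=
  (G.E \ S).filter fun e =>
    ((G.ends e).1 ∈ Z ∧ (G.ends e).2 ∉ Z) ∨ ((G.ends e).1 ∉ Z ∧ (G.ends e).2 ∈ Z)

/-- Adjacency via an edge belonging to `F ∩ E`. -/
def adjOn (F : Finset ℕ) (u v : ℕ) : Prop :=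
  ∃ e ∈ F ∩ G.E, G.ends e = (u, v) ∨ G.ends e = (v, u)

/-- Number of connected components of the subgraph with vertex set `W` and
edge set `F`. -/
noncomputable def ncomp (W F : Finset ℕ) : ℕ :=
  Nat.card (Quot (fun u v : {x : ℕ // x ∈ W} => G.adjOn F u.1 v.1))

/-- The subgraph with vertex set `W` and edge set `F` is connected. -/
def ConnSub (W F : Finset ℕ) : Prop := G.ncomp W F = 1

/-- `G` is connected. -/
def Connected : Prop := G.ConnSub G.V G.E

/-- Genus of the subgraph with vertex set `W` and edge set `F`:
`∑_{v ∈ W} w(v) − |W| + |F| + c`. -/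
noncomputable def subGenus (W F : Finset ℕ) : ℤ :=
  (∑ v ∈ W, (G.w v : ℤ)) - (W.card : ℤ) + (((F ∩ G.E).card : ℤ)) + (G.ncomp W F : ℤ)

/-- The genus of `G`. -/
noncomputable def genus : ℤ := G.subGenus G.V G.E

/-- The degree of a vertex: the number of half-edges having `v` as end. -/
def deg (v : ℕ) : ℕ :=
  ∑ e ∈ G.E, ((if (G.ends e).1 = v then 1 else 0) + (if (G.ends e).2 = v then 1 else 0))

/-- `e` is a bridge of `G − S`: removing it increases the number of connected
components. -/
def IsBridge (S : Finset ℕ) (e : ℕ) : Prop :=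
  e ∈ G.E \ S ∧ G.ncomp G.V (G.E \ S) < G.ncomp G.V (G.E \ insert e S)

/-- The set of bridges of `G − S`. -/
noncomputable def bridges (S : Finset ℕ) : Finset ℕ := (G.E \ S).filter (G.IsBridge S)

/-- `T` is a cut of `G`, i.e. `T = E(Z, Zᶜ)` for some `∅ ⊊ Z ⊊ V`. -/
def IsCut (T : Finset ℕ) : Prop :=
  ∃ Z, Z ⊆ G.V ∧ Z.Nonempty ∧ Z ≠ G.V ∧ T = G.cutEdges ∅ Z

/-- `W` is (the vertex set of) a connected component of `G − S`. -/
def IsCompOf (S W : Finset ℕ) : Prop :=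
  W ⊆ G.V ∧ W.Nonempty ∧ G.ConnSub W (G.indEdges S W) ∧ G.cutEdges S W = ∅

/-- The poset `A^b_G`: for `b = 0` the sets `S ⊆ E` with `G − S` bridgeless,
for `b = 1` the sets `S ⊆ E` with `G − S` connected. -/
def Ab (b : ℕ) (S : Finset ℕ) : Prop :=
  S ⊆ G.E ∧ ((b = 0 ∧ ∀ e, ¬ G.IsBridge S e) ∨ (b = 1 ∧ G.ConnSub G.V (G.E \ S)))

/-- `G` is a stable graph of genus `g`: connected, of genus `g`, and every
vertex of weight `0` has degree at least `3`. -/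
noncomputable def Stable (g : ℕ) : Prop :=
  G.Connected ∧ G.genus = (g : ℤ) ∧ ∀ v ∈ G.V, G.w v = 0 → 3 ≤ G.deg v

/-! ### Generalized orientations on spanning subgraphs -/

/-- `O` is orientation data for the spanning subgraph `G − S` (it is defined
exactly on the edges of `G − S`). -/
def IsOrientOn (S : Finset ℕ) (O : Orient) : Prop :=
  ∀ e, O e ≠ none ↔ e ∈ G.E \ S

/-- The set of bioriented edges of `O`. -/
def biE (O : Orient) : Finset ℕ := G.E.filter fun e => O e = some EdgeDir.bi

/-- `t^O_v`: the number of half-edges having `v` as target. -/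
def tOr (O : Orient) (v : ℕ) : ℕ := ∑ e ∈ G.E, dirT (O e) (G.ends e) v

/-- `t^O(Z)`: the number of edges of `G − S` not contained in `(G−S)[Z]`
having a target in `Z`. -/
def tCut (S : Finset ℕ) (O : Orient) (Z : Finset ℕ) : ℕ :=
  ∑ e ∈ (G.E \ S) \ G.indEdges S Z, ∑ v ∈ Z, dirT (O e) (G.ends e) v

/-- The divisor `d^O` of a `b`-orientation `O` on `G − S`:
`d^O_v = w(v) − 1 + t^O_v` if `G − S` has edges, and `d^O_v = w(v) − 1 + b`
otherwise; it is supported on `V`. -/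
noncomputable def divOr (S : Finset ℕ) (b : ℕ) (O : Orient) : ℕ → ℤ :=
  fun v => if v ∈ G.V then
      (if G.E \ S = ∅ then (G.w v : ℤ) - 1 + (b : ℤ) else (G.w v : ℤ) - 1 + (G.tOr O v : ℤ))
    else 0

/-- Equivalence of generalized orientations on `G − S`:  both are orientations
on `G − S` and they have the same divisor. -/
noncomputable def equivOr (S : Finset ℕ) (b : ℕ) (O O' : Orient) : Prop :=
  G.IsOrientOn S O ∧ G.IsOrientOn S O' ∧ G.divOr S b O = G.divOr S b O'

/-- `O` is a totally cyclic orientation on `G − S`: every nonempty cut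
`E(Z,Zᶜ)` contains an edge with target in `Z` and an edge with target in `Zᶜ`. -/
def TotCyc (S : Finset ℕ) (O : Orient) : Prop :=
  ∀ Z : Finset ℕ, Z ⊆ G.V → Z.Nonempty → Z ≠ G.V → (G.cutEdges S Z).Nonempty →
    (∃ e ∈ G.cutEdges S Z, ∃ v ∈ Z, 0 < dirT (O e) (G.ends e) v) ∧
    (∃ e ∈ G.cutEdges S Z, ∃ v ∈ G.V \ Z, 0 < dirT (O e) (G.ends e) v)

/-- `O` is `e₀`-rooted on `G − S`: for every `Z ⊊ V` with `e₀` an edge of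
`(G−S)[Z]`, the cut `E(Z,Zᶜ)` contains an edge with target in `Zᶜ`. -/
def RootedAt (S : Finset ℕ) (O : Orient) (e₀ : ℕ) : Prop :=
  ∀ Z : Finset ℕ, Z ⊆ G.V → Z ≠ G.V → e₀ ∈ G.indEdges S Z →
    ∃ e ∈ G.cutEdges S Z, ∃ v ∈ G.V \ Z, 0 < dirT (O e) (G.ends e) v

/-- `O` is a rooted `1`-orientation on `G − S`:  it has exactly one bioriented
edge, at which it is rooted.  By convention, if `G − S` consists of a single
vertex (and no edges), the empty orientation is rooted. -/
def Rooted1 (S : Finset ℕ) (O : Orient) : Prop :=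
  (∃ e₀, G.biE O = {e₀} ∧ G.RootedAt S O e₀) ∨ (G.E \ S = ∅ ∧ G.V.card = 1)

/-- `O ∈ 𝒪^b(G−S)`:  for `b = 0`, a totally cyclic orientation on `G − S`;
for `b = 1`, a rooted `1`-orientation on `G − S`. -/
def MemOb (S : Finset ℕ) (b : ℕ) (O : Orient) : Prop :=
  G.IsOrientOn S O ∧
    ((b = 0 ∧ G.biE O = ∅ ∧ G.TotCyc S O) ∨ (b = 1 ∧ G.Rooted1 S O))

/-- `O` is a `b`-orientation on `G − S` (exactly `b` bioriented edges; by
convention the empty orientation on a one-vertex edgeless graph counts as a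
`1`-orientation). -/
def IsbOr (S : Finset ℕ) (b : ℕ) (O : Orient) : Prop :=
  G.IsOrientOn S O ∧
    ((G.biE O).card = b ∨ (G.E \ S = ∅ ∧ G.V.card = 1 ∧ b = 1))

/-! ### Posets of orientations on spanning subgraphs -/

/-- The order of `𝒪𝒫^b_G` on pairs `(S, O_S)`:  `(S,O_S) ≤ (T,O_T)` iff
`T ⊆ S` and the restriction of `O_T` to `G − S` is `O_S`. -/
def leOP (p q : Finset ℕ × Orient) : Prop :=
  q.1 ⊆ p.1 ∧ restr q.2 (G.E \ p.1) = p.2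

/-- The order of `𝒪̄𝒫^b_G` on pairs (representing classes): `(S,O̅_S) ≤ (T,O̅_T)`
iff `T ⊆ S` and some representative of `O̅_T` restricts on `G − S` to some
representative of `O̅_S`. -/
noncomputable def leOPbar (b : ℕ) (p q : Finset ℕ × Orient) : Prop :=
  q.1 ⊆ p.1 ∧ ∃ O', G.equivOr q.1 b O' q.2 ∧
    G.equivOr p.1 b (restr O' (G.E \ p.1)) p.2

/-- Equality in `𝒪̄𝒫^b_G`: same subgraph and equivalent orientations. -/
noncomputable def eqOP (b : ℕ) (p q : Finset ℕ × Orient) : Prop :=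
  p.1 = q.1 ∧ G.equivOr p.1 b p.2 q.2

/-- Membership in `𝒪𝒫^b_G`. -/
def POb (b : ℕ) (p : Finset ℕ × Orient) : Prop :=
  G.Ab b p.1 ∧ G.MemOb p.1 b p.2

/-! ### Stable divisors -/

/-- Stable divisors on `G − S` of degree `g(G−S) − c(G−S) + b` (`b = 0, 1`):
for `b = 1`, `G − S` is connected, the degree is `g(G−S)` and
`|d_Z| > g(Z) − 1` for every `Z ⊆ V`; for `b = 0`, the restriction of `d` to
every connected component `W` of `G − S` has degree `g(W) − 1` and satisfies
`|d_Z| > g(Z) − 1` for every `∅ ≠ Z ⊊ W`. -/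
noncomputable def StableDiv (S : Finset ℕ) (b : ℕ) (d : ℕ → ℤ) : Prop :=
  (∀ v, v ∉ G.V → d v = 0) ∧
  ((b = 1 ∧ G.ConnSub G.V (G.E \ S) ∧
      (∑ v ∈ G.V, d v) = G.subGenus G.V (G.E \ S) ∧
      ∀ Z ⊆ G.V, G.subGenus Z (G.indEdges S Z) - 1 < ∑ v ∈ Z, d v) ∨
   (b = 0 ∧ ∀ W, G.IsCompOf S W →
      (∑ v ∈ W, d v) = G.subGenus W (G.indEdges S W) - 1 ∧
      ∀ Z ⊆ W, Z.Nonempty → Z ≠ W →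
        G.subGenus Z (G.indEdges S Z) - 1 < ∑ v ∈ Z, d v))

/-! ### Contractions -/

/-- The relation identifying the two ends of each edge in `S₀`. -/
def conRel (S₀ : Finset ℕ) (u v : ℕ) : Prop :=
  ∃ e ∈ S₀ ∩ G.E, G.ends e = (u, v) ∨ G.ends e = (v, u)

/-- Representative (the least element) of the class of `v` under the
equivalence generated by identifying the ends of the edges in `S₀`. -/
noncomputable def crep (S₀ : Finset ℕ) (v : ℕ) : ℕ :=
  sInf {u | Relation.EqvGen (G.conRel S₀) u v}

/-- The (weighted) edge contraction `G/S₀`: every connected component of the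
subgraph spanned by `S₀` is contracted to a single vertex, whose weight is the
genus of that component; `E(G/S₀) = E(G) \ S₀`. -/
noncomputable def contract (S₀ : Finset ℕ) : MGraph where
  V := G.V.image (G.crep S₀)
  E := G.E \ S₀
  ends := fun e => (G.crep S₀ (G.ends e).1, G.crep S₀ (G.ends e).2)
  w := fun v =>
    (G.subGenus (G.V.filter fun u => G.crep S₀ u = v)
      (G.indEdges (G.E \ S₀) (G.V.filter fun u => G.crep S₀ u = v))).toNat
  ends_mem := by
    intro e he
    rw [Finset.mem_sdiff] at he
    exact ⟨Finset.mem_image_of_mem _ (G.ends_mem e he.1).1,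
           Finset.mem_image_of_mem _ (G.ends_mem e he.1).2⟩

/-- Deletion of the edges in `T` (a spanning subgraph, as a graph). -/
def ddel (T : Finset ℕ) : MGraph where
  V := G.V
  E := G.E \ T
  ends := G.ends
  w := G.w
  ends_mem := fun e he => G.ends_mem e (Finset.mem_sdiff.mp he).1

/-- Pullback `γ* T` of an edge set along the contraction `γ : G → G/S₀`:
`T ∪ (G−T)_br` for `b = 0`, and `T` for `b = 1`. -/
noncomputable def pullStar (b : ℕ) (T : Finset ℕ) : Finset ℕ :=
  if b = 0 then T ∪ G.bridges T else T

/-- Pushforward of a divisor along the contraction `γ : G → G/S₀`: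
`(γ_* d)_v = ∑_{z ∈ γ⁻¹(v)} d_z`. -/
noncomputable def pushDiv (S₀ : Finset ℕ) (d : ℕ → ℤ) : ℕ → ℤ :=
  fun v => ∑ z ∈ G.V.filter (fun u => G.crep S₀ u = v), d z

/-- The divisor `c^{γ,S}` on `G/S₀`: `c^{γ,S}_v = #{e ∈ S₀ ∩ S : γ(e) = v}`. -/
noncomputable def cGamma (S₀ S : Finset ℕ) : ℕ → ℤ :=
  fun v => ((((S₀ ∩ S) ∩ G.E).filter (fun e => G.crep S₀ (G.ends e).1 = v)).card : ℤ)

/-- The relation "`q` is a value of `γ̄_*` at `p`" for the contraction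
`γ : G → G/S₀` acting on classes of orientations: `q` is the restriction to
`(G/S₀) − γ_* S` of a representative of the class of `p` having no bioriented
edge in `S₀` (when `(G/S₀) − γ_*S` has no edges, any representative serves). -/
noncomputable def pushRel (S₀ : Finset ℕ) (b : ℕ) (p q : Finset ℕ × Orient) : Prop :=
  ∃ O', G.equivOr p.1 b O' p.2 ∧
    ((∀ e ∈ S₀, O' e ≠ some EdgeDir.bi) ∨ G.E \ (S₀ ∪ p.1) = ∅) ∧
    q.1 = p.1 \ S₀ ∧ q.2 = restr O' (G.E \ (S₀ ∪ p.1))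

/-! ### Isomorphisms and directed reachability -/

/-- `(fV, fE)` is an isomorphism from `G` to `H`. -/
def IsoMaps (H : MGraph) (fV fE : ℕ → ℕ) : Prop :=
  Set.BijOn fV ↑G.V ↑H.V ∧ Set.BijOn fE ↑G.E ↑H.E ∧
  (∀ e ∈ G.E, H.ends (fE e) = (fV (G.ends e).1, fV (G.ends e).2) ∨
              H.ends (fE e) = (fV (G.ends e).2, fV (G.ends e).1)) ∧
  (∀ v ∈ G.V, H.w (fV v) = G.w v)

/-- `G` and `H` are isomorphic graphs. -/
def Iso (H : MGraph) : Prop := ∃ fV fE, G.IsoMaps H fV fE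

/-- The edge-contraction relation: `G ≤ H` iff `H = G/S₀` (up to isomorphism)
for some `S₀ ⊆ E(G)`. -/
noncomputable def contractLE (H : MGraph) : Prop :=
  ∃ S₀ ⊆ G.E, (G.contract S₀).Iso H

/-- One step from `u` to `v` along an `O`-directed edge (a bioriented edge may
be traversed in both directions). -/
def dirStep (O : Orient) (u v : ℕ) : Prop :=
  ∃ e ∈ G.E,
    (O e = some EdgeDir.fwd ∧ G.ends e = (u, v)) ∨
    (O e = some EdgeDir.bwd ∧ G.ends e = (v, u)) ∨
    (O e = some EdgeDir.bi ∧ (G.ends e = (u, v) ∨ G.ends e = (v, u)))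

/-- There is an `O`-directed path from the (bioriented) edge `e` to the
vertex `v`: a directed path starting at one of the ends of `e` and ending
at `v`. -/
def dirReachFromEdge (O : Orient) (e v : ℕ) : Prop :=
  ∃ u, ((G.ends e).1 = u ∨ (G.ends e).2 = u) ∧
    Relation.ReflTransGen (G.dirStep O) u v

end MGraph

/-! ### Generic poset gadgets (for sets with an order, modulo an equivalence) -/

/-- `le` is a partial order on `{a | P a}` modulo the identification `eqv`. -/
def IsPartialOrderOnMod {α : Type*} (P : α → Prop) (eqv le : α → α → Prop) : Prop :=
  (∀ a, P a → le a a) ∧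
  (∀ a b c, P a → P b → P c → le a b → le b c → le a c) ∧
  (∀ a b, P a → P b → le a b → le b a → eqv a b)

/-- `le` is a partial order on `{a | P a}`. -/
def IsPartialOrderOn {α : Type*} (P : α → Prop) (le : α → α → Prop) : Prop :=
  IsPartialOrderOnMod P (· = ·) le

/-- `a'` covers `a` in `{a | P a}` ordered by `le`, modulo `eqv`. -/
def CoversOnMod {α : Type*} (P : α → Prop) (eqv le : α → α → Prop) (a a' : α) : Prop :=
  P a ∧ P a' ∧ le a a' ∧ ¬ eqv a a' ∧
    ∀ c, P c → le a c → le c a' → (eqv c a ∨ eqv c a')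

/-- `ρ` is a rank on `{a | P a}` ordered by `le`, modulo `eqv`:  along every
covering relation it increases by exactly `1`. -/
def IsRankOnMod {α : Type*} (P : α → Prop) (eqv le : α → α → Prop) (ρ : α → ℕ) : Prop :=
  ∀ a a', CoversOnMod P eqv le a a' → ρ a' = ρ a + 1

/-- `a'` covers `a` in `{a | P a}` ordered by `le`. -/
def CoversOn {α : Type*} (P : α → Prop) (le : α → α → Prop) : α → α → Prop :=
  CoversOnMod P (· = ·) le

/-- `ρ` is a rank on `{a | P a}` ordered by `le`. -/
def IsRankOn {α : Type*} (P : α → Prop) (le : α → α → Prop) (ρ : α → ℕ) : Prop :=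
  IsRankOnMod P (· = ·) le ρ

/-- `f` is a quotient of posets from `({a | P a}, lea)` onto `({b | Q b}, leb)`:
an order-preserving surjection such that any relation downstairs lifts to a
relation upstairs. -/
def IsPosetQuotient {α β : Type*} (P : α → Prop) (Q : β → Prop)
    (lea : α → α → Prop) (leb : β → β → Prop) (f : α → β) : Prop :=
  (∀ a, P a → Q (f a)) ∧
  (∀ a a', P a → P a' → lea a a' → leb (f a) (f a')) ∧
  (∀ b, Q b → ∃ a, P a ∧ f a = b) ∧
  (∀ b b', Q b → Q b' → leb b b' →
    ∃ a a', P a ∧ P a' ∧ f a = b ∧ f a' = b' ∧ lea a a')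

/-! ### Structures over the moduli of stable graphs -/

/-- Pairs `(G, S)` with `G` stable of genus `g` and `S ∈ A^b_G`. -/
noncomputable def PairStab (g b : ℕ) (p : MGraph × Finset ℕ) : Prop :=
  p.1.Stable g ∧ p.1.Ab b p.2

/-- Isomorphism of pairs `(G, S)`. -/
def PairIso (p q : MGraph × Finset ℕ) : Prop :=
  ∃ fV fE, p.1.IsoMaps q.1 fV fE ∧ p.2.image fE = q.2

/-- The order on `A^b_g`: `(G,S) ≤ (H,T)` iff there is a contraction
`γ : G → H` (a contraction of `G` followed by an isomorphism onto `H`) with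
`γ* T ⊆ S`. -/
noncomputable def AgLE (b : ℕ) (p q : MGraph × Finset ℕ) : Prop :=
  ∃ S₀ ⊆ p.1.E, ∃ fV fE, (p.1.contract S₀).IsoMaps q.1 fV fE ∧
    p.1.pullStar b (((p.1.contract S₀).E).filter fun e => fE e ∈ q.2) ⊆ p.2

/-- Triples `(G, S, O̅_S)` with `G` stable of genus `g`, `S ∈ A^b_G` and
`O_S ∈ 𝒪^b(G−S)` (representing elements of `𝒪̄𝒫^b_g`). -/
noncomputable def TripP (g b : ℕ) (x : MGraph × Finset ℕ × Orient) : Prop :=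
  x.1.Stable g ∧ x.1.Ab b x.2.1 ∧ x.1.MemOb x.2.1 b x.2.2

/-- Identification of triples: an isomorphism of the underlying graphs
carrying the subgraph and the class of the orientation (i.e. its divisor) of
one to the other. -/
noncomputable def TripEq (b : ℕ) (x y : MGraph × Finset ℕ × Orient) : Prop :=
  ∃ fV fE, x.1.IsoMaps y.1 fV fE ∧ x.2.1.image fE = y.2.1 ∧
    ∀ v ∈ x.1.V, y.1.divOr y.2.1 b y.2.2 (fV v) = x.1.divOr x.2.1 b x.2.2 v

/-- The order on `𝒪̄𝒫^b_g`: `(G, O̅_S) ≤ (H, O̅_T)` iff there is a contraction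
`γ : G → H` with `γ* T ⊆ S` and `γ̄_* O̅_S ≤ O̅_T`, the latter meaning that the
restriction of `O̅_T` to `H − γ_* S` equals `γ̄_* O̅_S` (compared through the
isomorphism, via the divisors). -/
noncomputable def OPgLE (b : ℕ) (x y : MGraph × Finset ℕ × Orient) : Prop :=
  ∃ S₀ ⊆ x.1.E, ∃ fV fE, (x.1.contract S₀).IsoMaps y.1 fV fE ∧
    x.1.pullStar b (((x.1.contract S₀).E).filter fun e => fE e ∈ y.2.1) ⊆ x.2.1 ∧
    ∃ O', x.1.equivOr x.2.1 b O' x.2.2 ∧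
      ((∀ e ∈ S₀, O' e ≠ some EdgeDir.bi) ∨ x.1.E \ (S₀ ∪ x.2.1) = ∅) ∧
      ∀ v ∈ (x.1.contract S₀).V,
        y.1.divOr ((x.2.1 \ S₀).image fE) b
            (restr y.2.2 (y.1.E \ (x.2.1 \ S₀).image fE)) (fV v)
          = (x.1.contract S₀).divOr (x.2.1 \ S₀) b
              (restr O' (x.1.E \ (S₀ ∪ x.2.1))) v


/-! ### Auxiliary lemmas for the pushforward theorem -/

namespace MGraph

variable (G : MGraph) (S₀ : Finset ℕ)

lemma crep_eqvGen (v : ℕ) : Relation.EqvGen (G.conRel S₀) (G.crep S₀ v) v := by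
  have h : ({u | Relation.EqvGen (G.conRel S₀) u v} : Set ℕ).Nonempty :=
    ⟨v, Relation.EqvGen.refl v⟩
  exact Nat.sInf_mem h

lemma crep_eq_of_eqvGen {u v : ℕ} (h : Relation.EqvGen (G.conRel S₀) u v) :
    G.crep S₀ u = G.crep S₀ v := by
  unfold crep
  congr 1
  ext x
  exact ⟨fun hx => Relation.EqvGen.trans _ _ _ hx h,
         fun hx => Relation.EqvGen.trans _ _ _ hx (Relation.EqvGen.symm _ _ h)⟩

lemma eqvGen_of_crep_eq {u v : ℕ} (h : G.crep S₀ u = G.crep S₀ v) :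
    Relation.EqvGen (G.conRel S₀) u v := by
  have h1 := G.crep_eqvGen S₀ u
  have h2 := G.crep_eqvGen S₀ v
  rw [h] at h1
  exact Relation.EqvGen.trans _ _ _ (Relation.EqvGen.symm _ _ h1) h2

lemma crep_ends_eq {e : ℕ} (he₀ : e ∈ S₀) (he : e ∈ G.E) :
    G.crep S₀ (G.ends e).1 = G.crep S₀ (G.ends e).2 :=
  G.crep_eq_of_eqvGen S₀ (Relation.EqvGen.rel _ _
    ⟨e, Finset.mem_inter.mpr ⟨he₀, he⟩, Or.inl rfl⟩)

lemma eqvGen_mem_V {u v : ℕ} (h : Relation.EqvGen (G.conRel S₀) u v) :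
    u = v ∨ (u ∈ G.V ∧ v ∈ G.V) := by
  induction h with
  | rel x y hxy =>
      obtain ⟨e, he, hends⟩ := hxy
      have hE := G.ends_mem e (Finset.mem_inter.mp he).2
      rcases hends with h | h <;> rw [h] at hE
      · exact Or.inr ⟨hE.1, hE.2⟩
      · exact Or.inr ⟨hE.2, hE.1⟩
  | refl x => exact Or.inl rfl
  | symm x y _ ih => rcases ih with h | h
                     · exact Or.inl h.symm
                     · exact Or.inr ⟨h.2, h.1⟩
  | trans x y z _ _ ih1 ih2 =>
      rcases ih1 with h1 | h1
      · rwa [h1]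
      · rcases ih2 with h2 | h2
        · exact Or.inr ⟨h1.1, h2 ▸ h1.2⟩
        · exact Or.inr ⟨h1.1, h2.2⟩

instance quotFinite (W F : Finset ℕ) :
    Finite (Quot (fun u v : {x : ℕ // x ∈ W} => G.adjOn F u.1 v.1)) :=
  Finite.of_surjective (Quot.mk _) Quot.mk_surjective

/-- removing one edge increases the number of components by at most one -/
lemma ncomp_erase_le (W F : Finset ℕ) (e : ℕ) :
    G.ncomp W (F.erase e) ≤ G.ncomp W F + 1 := by
  classical
  set r := fun u v : {x : ℕ // x ∈ W} => G.adjOn F u.1 v.1 with hr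
  set r' := fun u v : {x : ℕ // x ∈ W} => G.adjOn (F.erase e) u.1 v.1 with hr'
  have hmono : ∀ a b, r' a b → r a b := by
    rintro a b ⟨e', he', hends⟩
    exact ⟨e', Finset.mem_inter.mpr ⟨Finset.mem_of_mem_erase (Finset.mem_inter.mp he').1,
      (Finset.mem_inter.mp he').2⟩, hends⟩
  by_cases hW : (G.ends e).1 ∈ W ∧ (G.ends e).2 ∈ W ∧ e ∈ F ∩ G.E
  · set ψ : Quot r' → Quot r :=
      Quot.lift (Quot.mk r) (fun a b h => Quot.sound (hmono a b h)) with hψ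
    set A : Quot r' := Quot.mk r' ⟨(G.ends e).1, hW.1⟩ with hA
    set B : Quot r' := Quot.mk r' ⟨(G.ends e).2, hW.2.1⟩ with hB
    have key : ∀ a b : {x : ℕ // x ∈ W}, Relation.EqvGen r a b →
        Quot.mk r' a = Quot.mk r' b ∨
        ((Quot.mk r' a = A ∨ Quot.mk r' a = B) ∧ (Quot.mk r' b = A ∨ Quot.mk r' b = B)) := by
      intro a b h
      induction h with
      | rel x y hxy =>
          obtain ⟨e', he', hends⟩ := hxy
          by_cases hee : e' = e
          · subst hee
            right
            rcases hends with h | h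
            · constructor
              · left; rw [hA]; congr 1; exact Subtype.ext (show x.1 = (G.ends e').1 by rw [h])
              · right; rw [hB]; congr 1; exact Subtype.ext (show y.1 = (G.ends e').2 by rw [h])
            · constructor
              · right; rw [hB]; congr 1; exact Subtype.ext (show x.1 = (G.ends e').2 by rw [h])
              · left; rw [hA]; congr 1; exact Subtype.ext (show y.1 = (G.ends e').1 by rw [h])
          · left
            exact Quot.sound ⟨e', Finset.mem_inter.mpr
              ⟨Finset.mem_erase.mpr ⟨hee, (Finset.mem_inter.mp he').1⟩,
               (Finset.mem_inter.mp he').2⟩, hends⟩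
      | refl x => exact Or.inl rfl
      | symm x y _ ih =>
          rcases ih with h | h
          · exact Or.inl h.symm
          · exact Or.inr ⟨h.2, h.1⟩
      | trans x y z _ _ ih1 ih2 =>
          rcases ih1 with h1 | h1
          · rcases ih2 with h2 | h2
            · exact Or.inl (h1.trans h2)
            · exact Or.inr ⟨h1 ▸ h2.1, h2.2⟩
          · rcases ih2 with h2 | h2
            · exact Or.inr ⟨h1.1, h2 ▸ h1.2⟩
            · exact Or.inr ⟨h1.1, h2.2⟩
    have hinj : Function.Injective
        (fun x : Quot r' => if x = B then (Sum.inr () : Quot r ⊕ Unit) else Sum.inl (ψ x)) := by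
      intro x y hxy
      by_cases hx : x = B
      · by_cases hy : y = B
        · rw [hx, hy]
        · simp [hx, hy] at hxy
      · by_cases hy : y = B
        · simp [hx, hy] at hxy
        · simp only [hx, hy, if_neg, ite_false, Sum.inl.injEq] at hxy
          obtain ⟨a, rfl⟩ := Quot.exists_rep x
          obtain ⟨c, rfl⟩ := Quot.exists_rep y
          have heq : Quot.mk r a = Quot.mk r c := hxy
          rcases key a c (Quot.eq.mp heq) with h | h
          · exact h
          · rcases h.1 with h1 | h1
            · rcases h.2 with h2 | h2
              · rw [h1, h2]
              · exact absurd h2 hy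
            · exact absurd h1 hx
    calc G.ncomp W (F.erase e) = Nat.card (Quot r') := rfl
      _ ≤ Nat.card (Quot r ⊕ Unit) := Nat.card_le_card_of_injective _ hinj
      _ = G.ncomp W F + 1 := by rw [Nat.card_sum]; simp [ncomp]; rfl
  · have : r' = r := by
      funext a b
      apply propext
      constructor
      · exact hmono a b
      · rintro ⟨e', he', hends⟩
        refine ⟨e', Finset.mem_inter.mpr ⟨Finset.mem_erase.mpr ⟨?_, (Finset.mem_inter.mp he').1⟩,
          (Finset.mem_inter.mp he').2⟩, hends⟩
        rintro rfl
        rcases hends with h | h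
        · exact hW ⟨h ▸ a.2, h ▸ b.2, he'⟩
        · exact hW ⟨h ▸ b.2, h ▸ a.2, he'⟩
    have : G.ncomp W (F.erase e) = G.ncomp W F := by unfold ncomp; rw [show
      (fun u v : {x : ℕ // x ∈ W} => G.adjOn (F.erase e) u.1 v.1) = fun u v => G.adjOn F u.1 v.1
      from this]
    omega

lemma card_le_ncomp (W F : Finset ℕ) : W.card ≤ (F ∩ G.E).card + G.ncomp W F := by
  classical
  generalize hn : (F ∩ G.E).card = n
  induction n generalizing F with
  | zero =>
      have hFE : F ∩ G.E = ∅ := Finset.card_eq_zero.mp hn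
      have hempty : ∀ a b : {x : ℕ // x ∈ W}, ¬ G.adjOn F a.1 b.1 := by
        rintro a b ⟨e, he, -⟩
        simp [hFE] at he
      have hinj : Function.Injective
          (Quot.mk (fun u v : {x : ℕ // x ∈ W} => G.adjOn F u.1 v.1)) := by
        intro a b h
        have h2 := Quot.eq.mp h
        clear h
        induction h2 with
        | rel x y hxy => exact absurd hxy (hempty x y)
        | refl x => rfl
        | symm x y _ ih => exact ih.symm
        | trans x y z _ _ ih1 ih2 => exact ih1.trans ih2
      have := Nat.card_le_card_of_injective _ hinj
      rw [Nat.card_eq_fintype_card, Fintype.card_coe] at this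
      simpa [ncomp] using this
  | succ n ih =>
      have hne : (F ∩ G.E).Nonempty := by rw [← Finset.card_pos, hn]; omega
      obtain ⟨e, he⟩ := hne
      have h1 : (F.erase e ∩ G.E) = (F ∩ G.E).erase e := by
        ext x; simp [Finset.mem_erase, Finset.mem_inter]
      have h2 : (F.erase e ∩ G.E).card = n := by
        rw [h1, Finset.card_erase_of_mem he, hn]; omega
      have := ih (F.erase e) h2
      have h3 := G.ncomp_erase_le W F e
      omega

lemma mem_fiber_iff (v u : ℕ) :
    u ∈ G.V.filter (fun x => G.crep S₀ x = v) ↔ u ∈ G.V ∧ G.crep S₀ u = v := by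
  simp

lemma ncomp_fiber {v : ℕ} (hv : v ∈ (G.contract S₀).V) :
    G.ncomp (G.V.filter fun u => G.crep S₀ u = v)
      (G.indEdges (G.E \ S₀) (G.V.filter fun u => G.crep S₀ u = v)) = 1 := by
  classical
  set W := G.V.filter fun u => G.crep S₀ u = v with hW
  set F₀ := G.indEdges (G.E \ S₀) W with hF₀
  set r := fun a b : {x : ℕ // x ∈ W} => G.adjOn F₀ a.1 b.1 with hrdef
  have key : ∀ a b : ℕ, Relation.EqvGen (G.conRel S₀) a b →
      ∀ (ha : a ∈ W) (hb : b ∈ W), Quot.mk r ⟨a, ha⟩ = Quot.mk r ⟨b, hb⟩ := by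
    intro a b h
    induction h with
    | rel x y hxy =>
        intro hx hy
        obtain ⟨e, he, hends⟩ := hxy
        have he' := Finset.mem_inter.mp he
        have hbase : e ∈ G.E \ (G.E \ S₀) := by
          simp [Finset.mem_sdiff, he'.1, he'.2]
        have hendsW : (G.ends e).1 ∈ W ∧ (G.ends e).2 ∈ W := by
          rcases hends with h | h
          · rw [h]; exact ⟨hx, hy⟩
          · rw [h]; exact ⟨hy, hx⟩
        have heF : e ∈ F₀ ∩ G.E :=
          Finset.mem_inter.mpr ⟨Finset.mem_filter.mpr ⟨hbase, hendsW⟩, he'.2⟩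
        exact Quot.sound ⟨e, heF, hends⟩
    | refl x => intro ha hb; rfl
    | symm x y _ ih => intro hy hx; exact (ih hx hy).symm
    | trans x y z hxy hyz ih1 ih2 =>
        intro hx hz
        rcases G.eqvGen_mem_V S₀ hxy with heq | hV
        · subst heq; exact ih2 hx hz
        · have hy : y ∈ W := by
            rw [hW, Finset.mem_filter]
            refine ⟨hV.2, ?_⟩
            have := G.crep_eq_of_eqvGen S₀ hxy
            have hx' := (Finset.mem_filter.mp hx).2
            rw [← this]; exact hx'
          exact (ih1 hx hy).trans (ih2 hy hz)
  have hq : G.ncomp W F₀ = Nat.card (Quot r) := rfl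
  rw [hq, Nat.card_eq_one_iff_unique]
  constructor
  · constructor
    intro q1 q2
    obtain ⟨a, rfl⟩ := Quot.exists_rep q1
    obtain ⟨b, rfl⟩ := Quot.exists_rep q2
    have ha := (Finset.mem_filter.mp a.2).2
    have hb := (Finset.mem_filter.mp b.2).2
    have := key a.1 b.1 (G.eqvGen_of_crep_eq S₀ (ha.trans hb.symm)) a.2 b.2
    exact this
  · obtain ⟨u, hu, hcu⟩ := Finset.mem_image.mp hv
    exact ⟨Quot.mk r ⟨u, Finset.mem_filter.mpr ⟨hu, hcu⟩⟩⟩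

lemma fiber_nonempty {v : ℕ} (hv : v ∈ (G.contract S₀).V) :
    (G.V.filter fun u => G.crep S₀ u = v).Nonempty := by
  obtain ⟨u, hu, hcu⟩ := Finset.mem_image.mp hv
  exact ⟨u, Finset.mem_filter.mpr ⟨hu, hcu⟩⟩

lemma contract_w_eq {v : ℕ} (hv : v ∈ (G.contract S₀).V) :
    (((G.contract S₀).w v : ℤ)) =
      (∑ u ∈ G.V.filter (fun x => G.crep S₀ x = v), (G.w u : ℤ))
        - ((G.V.filter fun x => G.crep S₀ x = v).card : ℤ)
        + (((G.indEdges (G.E \ S₀) (G.V.filter fun x => G.crep S₀ x = v)) ∩ G.E).card : ℤ)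
        + 1 := by
  classical
  set W := G.V.filter fun x => G.crep S₀ x = v with hW
  set F₀ := G.indEdges (G.E \ S₀) W with hF₀
  have hnc : G.ncomp W F₀ = 1 := G.ncomp_fiber S₀ hv
  have hle : W.card ≤ (F₀ ∩ G.E).card + 1 := by
    have := G.card_le_ncomp W F₀
    omega
  have hsub : G.subGenus W F₀ =
      (∑ u ∈ W, (G.w u : ℤ)) - W.card + ((F₀ ∩ G.E).card : ℤ) + 1 := by
    rw [subGenus, hnc]; push_cast; ring
  have hnonneg : 0 ≤ G.subGenus W F₀ := by
    rw [hsub]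
    have hsw : 0 ≤ ∑ u ∈ W, (G.w u : ℤ) := Finset.sum_nonneg fun u _ => Int.natCast_nonneg _
    have : (W.card : ℤ) ≤ ((F₀ ∩ G.E).card : ℤ) + 1 := by exact_mod_cast hle
    omega
  have : ((G.contract S₀).w v : ℤ) = G.subGenus W F₀ := by
    show ((G.subGenus W F₀).toNat : ℤ) = G.subGenus W F₀
    exact Int.toNat_of_nonneg hnonneg
  rw [this, hsub]

lemma restr_mem_eq {O : Orient} {D : Finset ℕ} {e : ℕ} (h : e ∈ D) : restr O D e = O e :=
  if_pos h

lemma restr_not_mem_eq {O : Orient} {D : Finset ℕ} {e : ℕ} (h : e ∉ D) : restr O D e = none :=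
  if_neg h

lemma contract_E : (G.contract S₀).E = G.E \ S₀ := rfl

lemma contract_ends (e : ℕ) :
    (G.contract S₀).ends e = (G.crep S₀ (G.ends e).1, G.crep S₀ (G.ends e).2) := rfl

lemma contract_sdiff_eq (S : Finset ℕ) :
    (G.contract S₀).E \ (S \ S₀) = G.E \ (S₀ ∪ S) := by
  ext e
  rw [contract_E]
  simp only [Finset.mem_sdiff, Finset.mem_union]
  tauto

lemma orient_eq_none {S : Finset ℕ} {O : Orient} (hOr : G.IsOrientOn S O) {e : ℕ}
    (h : e ∉ G.E \ S) : O e = none := by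
  by_contra hne
  exact h ((hOr e).mp hne)

lemma orient_fwd_or_bwd {S : Finset ℕ} {O : Orient} (hOr : G.IsOrientOn S O)
    (hbi : ∀ e ∈ S₀, O e ≠ some EdgeDir.bi) {e : ℕ} (he : e ∈ G.E \ S) (heS₀ : e ∈ S₀) :
    O e = some EdgeDir.fwd ∨ O e = some EdgeDir.bwd := by
  have hne := (hOr e).mpr he
  rcases h : O e with _ | d
  · exact absurd h hne
  · cases d with
    | fwd => exact Or.inl rfl
    | bwd => exact Or.inr rfl
    | bi => exact absurd h (hbi e heS₀)

lemma biE_push {S : Finset ℕ} {O : Orient} (hOr : G.IsOrientOn S O)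
    (hbi : ∀ e ∈ S₀, O e ≠ some EdgeDir.bi) :
    (G.contract S₀).biE (restr O (G.E \ (S₀ ∪ S))) = G.biE O := by
  ext e
  rw [biE, biE, contract_E]
  simp only [Finset.mem_filter, Finset.mem_sdiff]
  constructor
  · rintro ⟨⟨heE, heS₀⟩, hbival⟩
    by_cases h : e ∈ G.E \ (S₀ ∪ S)
    · rw [restr_mem_eq h] at hbival; exact ⟨heE, hbival⟩
    · rw [restr_not_mem_eq h] at hbival; simp at hbival
  · rintro ⟨heE, hbival⟩
    have heS₀ : e ∉ S₀ := fun h => hbi e h hbival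
    have heS : e ∉ S := by
      intro h
      have := G.orient_eq_none hOr (e := e) (by simp [h])
      rw [this] at hbival
      simp at hbival
    have heD : e ∈ G.E \ (S₀ ∪ S) := by
      simp [Finset.mem_sdiff, Finset.mem_union, heE, heS₀, heS]
    exact ⟨⟨heE, heS₀⟩, by rw [restr_mem_eq heD]; exact hbival⟩

lemma sum_tOr_push (S : Finset ℕ) (O : Orient) (hOr : G.IsOrientOn S O) (hS₀ : S₀ ⊆ G.E)
    (hbi : ∀ e ∈ S₀, O e ≠ some EdgeDir.bi) (v : ℕ) :
    ∑ z ∈ G.V.filter (fun u => G.crep S₀ u = v), G.tOr O z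
      + (((S₀ ∩ S) ∩ G.E).filter fun e => G.crep S₀ (G.ends e).1 = v).card
    = (G.contract S₀).tOr (restr O (G.E \ (S₀ ∪ S))) v
      + (G.indEdges (G.E \ S₀) (G.V.filter fun u => G.crep S₀ u = v)).card := by
  classical
  set W := G.V.filter fun u => G.crep S₀ u = v with hW
  set F₀ := G.indEdges (G.E \ S₀) W with hF₀
  set cset := ((S₀ ∩ S) ∩ G.E).filter (fun e => G.crep S₀ (G.ends e).1 = v) with hcset
  set O' := restr O (G.E \ (S₀ ∪ S)) with hO'
  have hmemW : ∀ p, p ∈ G.V → (p ∈ W ↔ G.crep S₀ p = v) := by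
    intro p hp; simp [hW, hp]
  have hswap : ∑ z ∈ W, G.tOr O z = ∑ e ∈ G.E, ∑ z ∈ W, dirT (O e) (G.ends e) z := by
    unfold tOr; exact Finset.sum_comm
  have hsdiff : ∑ e ∈ G.E \ S₀, (∑ z ∈ W, dirT (O e) (G.ends e) z)
      + ∑ e ∈ S₀, (∑ z ∈ W, dirT (O e) (G.ends e) z)
      = ∑ e ∈ G.E, ∑ z ∈ W, dirT (O e) (G.ends e) z := Finset.sum_sdiff hS₀
  have htH : (G.contract S₀).tOr O' v
      = ∑ e ∈ G.E \ S₀, dirT (O' e) (G.crep S₀ (G.ends e).1, G.crep S₀ (G.ends e).2) v := rfl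
  have claim1 : ∀ e ∈ G.E \ S₀, ∑ z ∈ W, dirT (O e) (G.ends e) z
      = dirT (O' e) (G.crep S₀ (G.ends e).1, G.crep S₀ (G.ends e).2) v := by
    intro e he
    obtain ⟨heE, heS₀⟩ := Finset.mem_sdiff.mp he
    have hV := G.ends_mem e heE
    have hmem1 := hmemW (G.ends e).1 hV.1
    have hmem2 := hmemW (G.ends e).2 hV.2
    by_cases heS : e ∈ S
    · have hOe : O e = none := G.orient_eq_none hOr (by simp [heS])
      have hO'e : O' e = none := by simp [hO', restr, hOe]
      simp [hOe, hO'e, dirT]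
    · have heD : e ∈ G.E \ (S₀ ∪ S) := by
        simp [Finset.mem_sdiff, Finset.mem_union, heE, heS₀, heS]
      have hO'e : O' e = O e := by rw [hO']; exact restr_mem_eq heD
      rw [hO'e]
      rcases hOe : O e with _ | d
      · simp [dirT]
      · cases d with
        | fwd =>
            show (∑ z ∈ W, if (G.ends e).2 = z then 1 else 0)
              = if G.crep S₀ (G.ends e).2 = v then 1 else 0
            rw [Finset.sum_ite_eq W (G.ends e).2 (fun _ => 1)]
            simp only [hmem2]
        | bwd =>
            show (∑ z ∈ W, if (G.ends e).1 = z then 1 else 0)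
              = if G.crep S₀ (G.ends e).1 = v then 1 else 0
            rw [Finset.sum_ite_eq W (G.ends e).1 (fun _ => 1)]
            simp only [hmem1]
        | bi =>
            show (∑ z ∈ W, ((if (G.ends e).1 = z then 1 else 0) + (if (G.ends e).2 = z then 1 else 0)))
              = (if G.crep S₀ (G.ends e).1 = v then 1 else 0)
                + (if G.crep S₀ (G.ends e).2 = v then 1 else 0)
            rw [Finset.sum_add_distrib, Finset.sum_ite_eq W (G.ends e).1 (fun _ => 1),
              Finset.sum_ite_eq W (G.ends e).2 (fun _ => 1)]
            simp only [hmem1, hmem2]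
  have hcsub : cset ⊆ S₀ := by
    intro e he
    exact (Finset.mem_inter.mp (Finset.mem_inter.mp (Finset.mem_filter.mp he).1).1).1
  have hFsub : F₀ ⊆ S₀ := by
    intro e he
    have := (Finset.mem_sdiff.mp (Finset.mem_filter.mp he).1).2
    simp only [Finset.mem_sdiff, not_and, not_not] at this
    exact this (Finset.mem_sdiff.mp (Finset.mem_filter.mp he).1).1
  have hccard : cset.card = ∑ e ∈ S₀, (if e ∈ cset then 1 else 0) := by
    rw [Finset.sum_ite_mem, Finset.inter_eq_right.mpr hcsub, Finset.sum_const, smul_eq_mul,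
      mul_one]
  have hFcard : F₀.card = ∑ e ∈ S₀, (if e ∈ F₀ then 1 else 0) := by
    rw [Finset.sum_ite_mem, Finset.inter_eq_right.mpr hFsub, Finset.sum_const, smul_eq_mul,
      mul_one]
  have claim2 : ∀ e ∈ S₀, (∑ z ∈ W, dirT (O e) (G.ends e) z) + (if e ∈ cset then 1 else 0)
      = (if e ∈ F₀ then 1 else 0) := by
    intro e heS₀
    have heE := hS₀ heS₀
    have hcrep := G.crep_ends_eq S₀ heS₀ heE
    have hV := G.ends_mem e heE
    have hmem1 := hmemW (G.ends e).1 hV.1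
    have hmem2 := hmemW (G.ends e).2 hV.2
    have hFmem : e ∈ F₀ ↔ G.crep S₀ (G.ends e).1 = v := by
      rw [hF₀, indEdges, Finset.mem_filter, Finset.mem_sdiff]
      constructor
      · rintro ⟨-, h1, -⟩; exact (hmem1.mp h1)
      · intro h
        refine ⟨?_, hmem1.mpr h, hmem2.mpr (by rw [← hcrep]; exact h)⟩
        simp [heE, heS₀]
    by_cases heS : e ∈ S
    · have hOe : O e = none := G.orient_eq_none hOr (by simp [heS])
      have hcmem : e ∈ cset ↔ G.crep S₀ (G.ends e).1 = v := by
        rw [hcset, Finset.mem_filter]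
        simp [heS₀, heS, heE]
      simp only [hOe, dirT, Finset.sum_const_zero, zero_add]
      by_cases hcr : G.crep S₀ (G.ends e).1 = v
      · rw [if_pos (hcmem.mpr hcr), if_pos (hFmem.mpr hcr)]
      · rw [if_neg (fun h => hcr (hcmem.mp h)), if_neg (fun h => hcr (hFmem.mp h))]
    · have heES : e ∈ G.E \ S := by simp [heE, heS]
      have hcne : e ∉ cset := by
        rw [hcset, Finset.mem_filter]
        rintro ⟨h1, -⟩
        exact heS (Finset.mem_inter.mp (Finset.mem_inter.mp h1).1).2
      rw [if_neg hcne, add_zero]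
      rcases G.orient_fwd_or_bwd S₀ hOr hbi heES heS₀ with hOe | hOe
      · rw [hOe]
        show (∑ z ∈ W, if (G.ends e).2 = z then 1 else 0) = _
        rw [Finset.sum_ite_eq W (G.ends e).2 (fun _ => 1)]
        simp only [hmem2, ← hcrep, hFmem]
      · rw [hOe]
        show (∑ z ∈ W, if (G.ends e).1 = z then 1 else 0) = _
        rw [Finset.sum_ite_eq W (G.ends e).1 (fun _ => 1)]
        simp only [hmem1, hFmem]
  calc ∑ z ∈ W, G.tOr O z + cset.card
      = (∑ e ∈ G.E \ S₀, (∑ z ∈ W, dirT (O e) (G.ends e) z))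
        + ((∑ e ∈ S₀, (∑ z ∈ W, dirT (O e) (G.ends e) z)) + cset.card) := by
        rw [hswap, ← hsdiff]; ring
    _ = (G.contract S₀).tOr O' v + F₀.card := by
        rw [htH, Finset.sum_congr rfl claim1, hccard, hFcard, ← Finset.sum_add_distrib,
          Finset.sum_congr rfl claim2]

lemma divOr_push (b : ℕ) (hb : b = 0 ∨ b = 1) (S : Finset ℕ) (hS : S ⊆ G.E) (O : Orient)
    (hO : G.IsbOr S b O) (hS₀ : S₀ ⊆ G.E) (hbi : ∀ e ∈ S₀, O e ≠ some EdgeDir.bi) :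
    G.pushDiv S₀ (G.divOr S b O) = fun v =>
      (G.contract S₀).divOr (S \ S₀) b (restr O (G.E \ (S₀ ∪ S))) v - G.cGamma S₀ S v := by
  classical
  obtain ⟨hOr, hOcard⟩ := hO
  funext v
  set W := G.V.filter fun u => G.crep S₀ u = v with hWdef
  set F₀ := G.indEdges (G.E \ S₀) W with hF₀def
  set cset := ((S₀ ∩ S) ∩ G.E).filter (fun e => G.crep S₀ (G.ends e).1 = v) with hcsetdef
  set O' := restr O (G.E \ (S₀ ∪ S)) with hO'def
  have hcG : G.cGamma S₀ S v = (cset.card : ℤ) := rfl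
  by_cases hv : v ∈ (G.contract S₀).V
  · -- main case
    have hHsd : (G.contract S₀).E \ (S \ S₀) = G.E \ (S₀ ∪ S) := G.contract_sdiff_eq S₀ S
    have hw := G.contract_w_eq S₀ hv
    have hst := G.sum_tOr_push S₀ S O hOr hS₀ hbi v
    have hstZ : (∑ z ∈ W, (G.tOr O z : ℤ)) + (cset.card : ℤ)
        = ((G.contract S₀).tOr O' v : ℤ) + (F₀.card : ℤ) := by
      exact_mod_cast hst
    have hF₀E : F₀ ∩ G.E = F₀ := by
      apply Finset.inter_eq_left.mpr
      intro e he
      exact (Finset.mem_sdiff.mp (Finset.mem_filter.mp he).1).1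
    have hwZ : ((G.contract S₀).w v : ℤ)
        = (∑ u ∈ W, (G.w u : ℤ)) - (W.card : ℤ) + (F₀.card : ℤ) + 1 := by
      rw [hw, hF₀E]
    have hLHS : G.pushDiv S₀ (G.divOr S b O) v
        = ∑ z ∈ W, (if G.E \ S = ∅ then (G.w z : ℤ) - 1 + (b : ℤ)
            else (G.w z : ℤ) - 1 + (G.tOr O z : ℤ)) := by
      rw [pushDiv]
      apply Finset.sum_congr rfl
      intro z hz
      rw [divOr, if_pos (Finset.mem_filter.mp hz).1]
    have hRHS : (G.contract S₀).divOr (S \ S₀) b O' v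
        = if G.E \ (S₀ ∪ S) = ∅ then ((G.contract S₀).w v : ℤ) - 1 + (b : ℤ)
          else ((G.contract S₀).w v : ℤ) - 1 + ((G.contract S₀).tOr O' v : ℤ) := by
      rw [divOr, if_pos hv, hHsd]
    rw [hLHS, hRHS, hcG]
    by_cases h1 : G.E \ (S₀ ∪ S) = ∅
    · rw [if_pos h1]
      by_cases h2 : G.E \ S = ∅
      · -- subcase ii : G − S edgeless
        have hES : ∀ e ∈ G.E, e ∈ S := by
          intro e he
          by_contra h
          exact Finset.notMem_empty e (h2 ▸ Finset.mem_sdiff.mpr ⟨he, h⟩)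
        have hFc : F₀ = cset := by
          ext e
          constructor
          · intro he
            have h0 := Finset.mem_filter.mp he
            have hbase := Finset.mem_sdiff.mp h0.1
            have heE : e ∈ G.E := hbase.1
            have heS₀ : e ∈ S₀ := by
              have := hbase.2
              simp only [Finset.mem_sdiff, not_and, not_not] at this
              exact this heE
            refine Finset.mem_filter.mpr ⟨Finset.mem_inter.mpr
              ⟨Finset.mem_inter.mpr ⟨heS₀, hES e heE⟩, heE⟩, ?_⟩
            exact (Finset.mem_filter.mp h0.2.1).2
          · intro he
            have h0 := Finset.mem_filter.mp he
            have h1' := Finset.mem_inter.mp h0.1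
            have h2' := Finset.mem_inter.mp h1'.1
            have heE : e ∈ G.E := h1'.2
            have heS₀ : e ∈ S₀ := h2'.1
            have hV := G.ends_mem e heE
            have hcrep := G.crep_ends_eq S₀ heS₀ heE
            refine Finset.mem_filter.mpr ⟨Finset.mem_sdiff.mpr ⟨heE, by simp [heS₀]⟩,
              Finset.mem_filter.mpr ⟨hV.1, h0.2⟩,
              Finset.mem_filter.mpr ⟨hV.2, by rw [← hcrep]; exact h0.2⟩⟩
        have hbW : (b : ℤ) * (W.card : ℤ) = (b : ℤ) := by
          rcases hb with hb0 | hb1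
          · rw [hb0]; simp
          · rw [hb1]
            have hV1 : G.V.card = 1 := by
              rcases hOcard with hcard | hdeg
              · exfalso
                have hbiempty : G.biE O = ∅ := by
                  rw [biE]
                  apply Finset.filter_false_of_mem
                  intro e he
                  rw [G.orient_eq_none hOr (by simp [hES e he])]
                  simp
                rw [hbiempty, hb1] at hcard
                simp at hcard
              · exact hdeg.2.1
            have hW1 : W.card = 1 := by
              have hle : W.card ≤ 1 := hV1 ▸ Finset.card_le_card (Finset.filter_subset _ _)
              have hge : 1 ≤ W.card := Finset.card_pos.mpr (G.fiber_nonempty S₀ hv)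
              omega
            rw [hW1]; simp
        have hsum0 : (∑ z ∈ W, if G.E \ S = ∅ then (G.w z : ℤ) - 1 + (b : ℤ)
            else (G.w z : ℤ) - 1 + (G.tOr O z : ℤ))
            = ∑ z ∈ W, ((G.w z : ℤ) - 1 + (b : ℤ)) :=
          Finset.sum_congr rfl (fun z _ => if_pos h2)
        rw [hsum0]
        have : ∑ z ∈ W, ((G.w z : ℤ) - 1 + (b : ℤ))
            = (∑ u ∈ W, (G.w u : ℤ)) - (W.card : ℤ) + (b : ℤ) * (W.card : ℤ) := by
          rw [Finset.sum_add_distrib, Finset.sum_sub_distrib, Finset.sum_const,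
            Finset.sum_const]
          push_cast
          ring
        rw [this, hbW, hwZ, hFc]
        ring
      · -- subcase iii : all edges of G−S contracted, b must be 0
        have hb0 : b = 0 := by
          rcases hb with hb0 | hb1
          · exact hb0
          · exfalso
            rcases hOcard with hcard | hdeg
            · rw [hb1] at hcard
              have hne : (G.biE O).Nonempty := Finset.card_pos.mp (by omega)
              obtain ⟨e₀, he₀⟩ := hne
              have he₀E := (Finset.mem_filter.mp he₀).1
              have he₀bi := (Finset.mem_filter.mp he₀).2
              have he₀ES : e₀ ∈ G.E \ S := (hOr e₀).mp (by rw [he₀bi]; simp)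
              have he₀S₀ : e₀ ∈ S₀ := by
                by_contra h
                exact Finset.notMem_empty e₀ (h1 ▸ Finset.mem_sdiff.mpr
                  ⟨he₀E, by simp [h, (Finset.mem_sdiff.mp he₀ES).2]⟩)
              exact hbi e₀ he₀S₀ he₀bi
            · exact h2 hdeg.1
        have htH0 : (G.contract S₀).tOr O' v = 0 := by
          rw [tOr]
          apply Finset.sum_eq_zero
          intro e he
          have : O' e = none := by
            rw [hO'def]
            exact restr_not_mem_eq (by rw [h1]; exact Finset.notMem_empty e)
          rw [this]
          rfl
        have hstZ' : (∑ z ∈ W, (G.tOr O z : ℤ)) = (F₀.card : ℤ) - (cset.card : ℤ) := by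
          rw [htH0] at hstZ
          push_cast at hstZ
          linarith
        have : ∑ z ∈ W, ((G.w z : ℤ) - 1 + (G.tOr O z : ℤ))
            = (∑ u ∈ W, (G.w u : ℤ)) - (W.card : ℤ) + ∑ z ∈ W, (G.tOr O z : ℤ) := by
          rw [Finset.sum_add_distrib, Finset.sum_sub_distrib, Finset.sum_const]
          push_cast
          ring
        have hsum0 : (∑ z ∈ W, if G.E \ S = ∅ then (G.w z : ℤ) - 1 + (b : ℤ)
            else (G.w z : ℤ) - 1 + (G.tOr O z : ℤ))
            = ∑ z ∈ W, ((G.w z : ℤ) - 1 + (G.tOr O z : ℤ)) :=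
          Finset.sum_congr rfl (fun z _ => if_neg h2)
        rw [hsum0, this, hstZ', hwZ, hb0]
        push_cast
        ring
    · -- main subcase: the contracted graph still has edges
      rw [if_neg h1]
      have h2 : ¬ G.E \ S = ∅ := by
        intro h2
        obtain ⟨e, he⟩ := Finset.nonempty_iff_ne_empty.mpr h1
        obtain ⟨heE, heu⟩ := Finset.mem_sdiff.mp he
        rw [Finset.mem_union] at heu
        push_neg at heu
        exact Finset.notMem_empty e (h2 ▸ Finset.mem_sdiff.mpr ⟨heE, heu.2⟩)
      have : ∑ z ∈ W, ((G.w z : ℤ) - 1 + (G.tOr O z : ℤ))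
          = (∑ u ∈ W, (G.w u : ℤ)) - (W.card : ℤ) + ∑ z ∈ W, (G.tOr O z : ℤ) := by
        rw [Finset.sum_add_distrib, Finset.sum_sub_distrib, Finset.sum_const]
        push_cast
        ring
      have hsum0 : (∑ z ∈ W, if G.E \ S = ∅ then (G.w z : ℤ) - 1 + (b : ℤ)
          else (G.w z : ℤ) - 1 + (G.tOr O z : ℤ))
          = ∑ z ∈ W, ((G.w z : ℤ) - 1 + (G.tOr O z : ℤ)) :=
        Finset.sum_congr rfl (fun z _ => if_neg h2)
      rw [hsum0, this, hwZ]
      linarith [hstZ]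
  · -- v not a vertex of the contraction
    have hWempty : W = ∅ := by
      rw [hWdef]
      apply Finset.filter_false_of_mem
      intro u hu hc
      exact hv (Finset.mem_image.mpr ⟨u, hu, hc⟩)
    have hLHS : G.pushDiv S₀ (G.divOr S b O) v = 0 := by
      rw [pushDiv]
      show ∑ z ∈ W, G.divOr S b O z = 0
      rw [hWempty, Finset.sum_empty]
    have hRHS : (G.contract S₀).divOr (S \ S₀) b O' v = 0 := by
      rw [divOr, if_neg hv]
    have hcset : cset = ∅ := by
      rw [hcsetdef]
      apply Finset.filter_false_of_mem
      intro e he hc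
      have heE := (Finset.mem_inter.mp he).2
      have hV := G.ends_mem e heE
      exact hv (hc ▸ Finset.mem_image.mpr ⟨(G.ends e).1, hV.1, rfl⟩)
    rw [hLHS, hRHS, hcG, hcset]
    simp

lemma orient_push {S : Finset ℕ} {O : Orient} (hOr : G.IsOrientOn S O) :
    (G.contract S₀).IsOrientOn (S \ S₀) (restr O (G.E \ (S₀ ∪ S))) := by
  intro e
  rw [G.contract_sdiff_eq S₀ S]
  constructor
  · intro hne
    by_cases h : e ∈ G.E \ (S₀ ∪ S)
    · exact h
    · rw [restr_not_mem_eq h] at hne; exact absurd rfl hne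
  · intro h
    rw [restr_mem_eq h]
    apply (hOr e).mpr
    simp only [Finset.mem_sdiff, Finset.mem_union] at h ⊢
    tauto

lemma cut_push (S Z : Finset ℕ) :
    (G.contract S₀).cutEdges (S \ S₀) Z
      = G.cutEdges S (G.V.filter fun u => G.crep S₀ u ∈ Z) := by
  classical
  ext e
  rw [cutEdges, cutEdges, Finset.mem_filter, Finset.mem_filter, G.contract_sdiff_eq S₀ S]
  have hmem : ∀ p, p ∈ G.V →
      (p ∈ G.V.filter (fun u => G.crep S₀ u ∈ Z) ↔ G.crep S₀ p ∈ Z) := by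
    intro p hp; simp [hp]
  constructor
  · rintro ⟨hbase, hcond⟩
    obtain ⟨heE, hnotu⟩ := Finset.mem_sdiff.mp hbase
    rw [Finset.mem_union] at hnotu
    push_neg at hnotu
    have hV := G.ends_mem e heE
    have h1 := hmem _ hV.1
    have h2 := hmem _ hV.2
    refine ⟨Finset.mem_sdiff.mpr ⟨heE, hnotu.2⟩, ?_⟩
    rw [G.contract_ends S₀ e] at hcond
    rcases hcond with ⟨ha, hb⟩ | ⟨ha, hb⟩
    · exact Or.inl ⟨h1.mpr ha, fun hc => hb (h2.mp hc)⟩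
    · exact Or.inr ⟨fun hc => ha (h1.mp hc), h2.mpr hb⟩
  · rintro ⟨hbase, hcond⟩
    obtain ⟨heE, hnS⟩ := Finset.mem_sdiff.mp hbase
    have hV := G.ends_mem e heE
    have h1 := hmem _ hV.1
    have h2 := hmem _ hV.2
    have heS₀ : e ∉ S₀ := by
      intro heS₀
      have hcrep := G.crep_ends_eq S₀ heS₀ heE
      rcases hcond with ⟨ha, hb⟩ | ⟨ha, hb⟩
      · exact hb (h2.mpr (hcrep ▸ h1.mp ha))
      · exact ha (h1.mpr (hcrep ▸ h2.mp hb))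
    have hun : e ∉ S₀ ∪ S := by
      rw [Finset.mem_union]
      push_neg
      exact ⟨heS₀, hnS⟩
    refine ⟨Finset.mem_sdiff.mpr ⟨heE, hun⟩, ?_⟩
    rw [G.contract_ends S₀ e]
    rcases hcond with ⟨ha, hb⟩ | ⟨ha, hb⟩
    · exact Or.inl ⟨h1.mp ha, fun hc => hb (h2.mpr hc)⟩
    · exact Or.inr ⟨fun hc => ha (h1.mpr hc), h2.mp hb⟩

lemma ind_push {S Z : Finset ℕ} {e : ℕ}
    (he : e ∈ (G.contract S₀).indEdges (S \ S₀) Z) :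
    e ∈ G.indEdges S (G.V.filter fun u => G.crep S₀ u ∈ Z) := by
  classical
  rw [indEdges, Finset.mem_filter, G.contract_sdiff_eq S₀ S] at he
  obtain ⟨hbase, hcond⟩ := he
  obtain ⟨heE, hnotu⟩ := Finset.mem_sdiff.mp hbase
  rw [Finset.mem_union] at hnotu
  push_neg at hnotu
  have hV := G.ends_mem e heE
  rw [G.contract_ends S₀ e] at hcond
  rw [indEdges, Finset.mem_filter]
  exact ⟨Finset.mem_sdiff.mpr ⟨heE, hnotu.2⟩,
    Finset.mem_filter.mpr ⟨hV.1, hcond.1⟩, Finset.mem_filter.mpr ⟨hV.2, hcond.2⟩⟩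

end MGraph

lemma dirT_push (d : Option EdgeDir) (p : ℕ × ℕ) (x : ℕ) (f : ℕ → ℕ)
    (hx : 0 < dirT d p x) : 0 < dirT d (f p.1, f p.2) (f x) := by
  cases d with
  | none => simp [dirT] at hx
  | some d =>
    cases d with
    | fwd =>
        simp only [dirT] at hx ⊢
        by_cases h : p.2 = x
        · rw [if_pos (show (f p.1, f p.2).2 = f x from congrArg f h)]; omega
        · rw [if_neg h] at hx; omega
    | bwd =>
        simp only [dirT] at hx ⊢
        by_cases h : p.1 = x
        · rw [if_pos (show (f p.1, f p.2).1 = f x from congrArg f h)]; omega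
        · rw [if_neg h] at hx; omega
    | bi =>
        simp only [dirT] at hx ⊢
        by_cases h1 : p.1 = x
        · rw [if_pos (show (f p.1, f p.2).1 = f x from congrArg f h1)]
          omega
        · by_cases h2 : p.2 = x
          · rw [if_pos (show (f p.1, f p.2).2 = f x from congrArg f h2)]
            omega
          · rw [if_neg h1, if_neg h2] at hx; omega

/-- Pushforward of orientations along a contraction
`γ : G → H = G/S₀` such that no edge of `S₀` is bioriented: `γ_* O_S` (the
restriction of `O_S` to `H − γ_* S`) is a `b`-orientation on `H − γ_* S`, and
(a) it belongs to `𝒪^b(H − γ_* S)` if `O_S ∈ 𝒪^b(G−S)`;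
(b) it is functorial in the contraction; (c) `γ_*(d^{O_S}) = d^{γ_* O_S} − c^{γ,S}`;
(d) it preserves equivalence; (e) it preserves the order `≤`. -/
theorem pushforward_of_orientations (G : MGraph) (b : ℕ) (hb : b = 0 ∨ b = 1)
    (S : Finset ℕ) (hS : S ⊆ G.E) (O : Orient) (hO : G.IsbOr S b O)
    (S₀ : Finset ℕ) (hS₀ : S₀ ⊆ G.E)
    (hbi : ∀ e ∈ S₀, O e ≠ some EdgeDir.bi) :
    (G.contract S₀).IsbOr (S \ S₀) b (restr O (G.E \ (S₀ ∪ S))) ∧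
    (G.MemOb S b O →
      (G.contract S₀).MemOb (S \ S₀) b (restr O (G.E \ (S₀ ∪ S)))) ∧
    (∀ T₀, T₀ ⊆ (G.contract S₀).E →
      restr O (G.E \ ((S₀ ∪ T₀) ∪ S)) =
        restr (restr O (G.E \ (S₀ ∪ S))) ((G.contract S₀).E \ (T₀ ∪ (S \ S₀)))) ∧
    (G.pushDiv S₀ (G.divOr S b O) =
      fun v => (G.contract S₀).divOr (S \ S₀) b (restr O (G.E \ (S₀ ∪ S))) v
        - G.cGamma S₀ S v) ∧
    (∀ O', G.IsbOr S b O' → (∀ e ∈ S₀, O' e ≠ some EdgeDir.bi) →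
      G.equivOr S b O' O →
      (G.contract S₀).equivOr (S \ S₀) b
        (restr O' (G.E \ (S₀ ∪ S))) (restr O (G.E \ (S₀ ∪ S)))) ∧
    (∀ T OT, T ⊆ S → G.IsbOr T b OT → restr OT (G.E \ S) = O →
      T \ S₀ ⊆ S \ S₀ ∧
      restr (restr OT (G.E \ (S₀ ∪ T))) ((G.contract S₀).E \ (S \ S₀)) =
        restr O (G.E \ (S₀ ∪ S))) := by
  classical
  have hOr : G.IsOrientOn S O := hO.1
  have hHsd : (G.contract S₀).E \ (S \ S₀) = G.E \ (S₀ ∪ S) := G.contract_sdiff_eq S₀ S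
  have hDsub : ∀ e, e ∈ G.E \ (S₀ ∪ S) → e ∈ G.E \ S := by
    intro e he
    simp only [Finset.mem_sdiff, Finset.mem_union] at he ⊢
    tauto
  have hOrient := G.orient_push S₀ hOr
  have hHVcard : G.V.card = 1 → (G.contract S₀).V.card = 1 := by
    intro hV1
    obtain ⟨u, hu⟩ := Finset.card_eq_one.mp hV1
    have : (G.contract S₀).V = {G.crep S₀ u} := by
      show G.V.image (G.crep S₀) = _
      rw [hu, Finset.image_singleton]
    rw [this, Finset.card_singleton]
  have hHempty : G.E \ S = ∅ → (G.contract S₀).E \ (S \ S₀) = ∅ := by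
    intro h
    rw [hHsd, Finset.eq_empty_iff_forall_notMem]
    intro e he
    exact Finset.notMem_empty e (h ▸ hDsub e he)
  refine ⟨⟨hOrient, ?_⟩, ?_, ?_, ?_, ?_, ?_⟩
  · -- b-orientation count
    rcases hO.2 with hcard | hdeg
    · left
      rw [G.biE_push S₀ hOr hbi]
      exact hcard
    · exact Or.inr ⟨hHempty hdeg.1, hHVcard hdeg.2.1, hdeg.2.2⟩
  · -- (a) membership in 𝒪^b is preserved
    rintro ⟨-, hcase⟩
    refine ⟨hOrient, ?_⟩
    rcases hcase with ⟨hb0, hbiE, htc⟩ | ⟨hb1, hroot⟩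
    · left
      refine ⟨hb0, by rw [G.biE_push S₀ hOr hbi, hbiE], ?_⟩
      intro Z hZ hZne hZneV hcutne
      set Z' := G.V.filter fun u => G.crep S₀ u ∈ Z with hZ'def
      have hcut := G.cut_push S₀ S Z
      have hZ'sub : Z' ⊆ G.V := Finset.filter_subset _ _
      have hZ'ne : Z'.Nonempty := by
        obtain ⟨z, hz⟩ := hZne
        obtain ⟨u, hu, hcu⟩ := Finset.mem_image.mp (hZ hz)
        exact ⟨u, Finset.mem_filter.mpr ⟨hu, by rw [hcu]; exact hz⟩⟩
      have hZ'neV : Z' ≠ G.V := by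
        intro hEq
        apply hZneV
        apply Finset.Subset.antisymm hZ
        intro x hx
        obtain ⟨u, hu, hcu⟩ := Finset.mem_image.mp hx
        have hu' : u ∈ Z' := hEq ▸ hu
        have := (Finset.mem_filter.mp hu').2
        rwa [hcu] at this
      have hcutne' : (G.cutEdges S Z').Nonempty := by rwa [hcut] at hcutne
      obtain ⟨⟨e1, he1, x1, hx1, hd1⟩, ⟨e2, he2, x2, hx2, hd2⟩⟩ :=
        htc Z' hZ'sub hZ'ne hZ'neV hcutne'
      have hbase : ∀ e, e ∈ G.cutEdges S Z' → e ∈ G.E \ (S₀ ∪ S) := by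
        intro e he
        have : e ∈ (G.contract S₀).cutEdges (S \ S₀) Z := by rw [hcut]; exact he
        rw [MGraph.cutEdges, Finset.mem_filter, hHsd] at this
        exact this.1
      constructor
      · refine ⟨e1, by rw [hcut]; exact he1, G.crep S₀ x1,
          (Finset.mem_filter.mp hx1).2, ?_⟩
        rw [MGraph.restr_mem_eq (hbase e1 he1), G.contract_ends S₀ e1]
        exact dirT_push _ _ _ _ hd1
      · obtain ⟨hx2V, hx2Z'⟩ := Finset.mem_sdiff.mp hx2
        refine ⟨e2, by rw [hcut]; exact he2, G.crep S₀ x2, ?_, ?_⟩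
        · rw [Finset.mem_sdiff]
          refine ⟨Finset.mem_image.mpr ⟨x2, hx2V, rfl⟩, fun hc => ?_⟩
          exact hx2Z' (Finset.mem_filter.mpr ⟨hx2V, hc⟩)
        · rw [MGraph.restr_mem_eq (hbase e2 he2), G.contract_ends S₀ e2]
          exact dirT_push _ _ _ _ hd2
    · right
      refine ⟨hb1, ?_⟩
      rcases hroot with ⟨e₀, hbiE, hroot⟩ | ⟨hempty, hV1⟩
      · left
        refine ⟨e₀, by rw [G.biE_push S₀ hOr hbi, hbiE], ?_⟩
        intro Z hZ hZneV hind
        set Z' := G.V.filter fun u => G.crep S₀ u ∈ Z with hZ'def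
        have hcut := G.cut_push S₀ S Z
        have hZ'sub : Z' ⊆ G.V := Finset.filter_subset _ _
        have hZ'neV : Z' ≠ G.V := by
          intro hEq
          apply hZneV
          apply Finset.Subset.antisymm hZ
          intro x hx
          obtain ⟨u, hu, hcu⟩ := Finset.mem_image.mp hx
          have hu' : u ∈ Z' := hEq ▸ hu
          have := (Finset.mem_filter.mp hu').2
          rwa [hcu] at this
        obtain ⟨e2, he2, x2, hx2, hd2⟩ := hroot Z' hZ'sub hZ'neV (G.ind_push S₀ hind)
        have hbase : e2 ∈ G.E \ (S₀ ∪ S) := by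
          have : e2 ∈ (G.contract S₀).cutEdges (S \ S₀) Z := by rw [hcut]; exact he2
          rw [MGraph.cutEdges, Finset.mem_filter, hHsd] at this
          exact this.1
        obtain ⟨hx2V, hx2Z'⟩ := Finset.mem_sdiff.mp hx2
        refine ⟨e2, by rw [hcut]; exact he2, G.crep S₀ x2, ?_, ?_⟩
        · rw [Finset.mem_sdiff]
          refine ⟨Finset.mem_image.mpr ⟨x2, hx2V, rfl⟩, fun hc => ?_⟩
          exact hx2Z' (Finset.mem_filter.mpr ⟨hx2V, hc⟩)
        · rw [MGraph.restr_mem_eq hbase, G.contract_ends S₀ e2]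
          exact dirT_push _ _ _ _ hd2
      · exact Or.inr ⟨hHempty hempty, hHVcard hV1⟩
  · -- (b) functoriality
    intro T₀ hT₀
    funext e
    by_cases h : e ∈ G.E \ ((S₀ ∪ T₀) ∪ S)
    · have h1 : e ∈ G.E \ (S₀ ∪ S) := by
        simp only [Finset.mem_sdiff, Finset.mem_union] at h ⊢
        tauto
      have h2 : e ∈ (G.contract S₀).E \ (T₀ ∪ (S \ S₀)) := by
        rw [MGraph.contract_E]
        simp only [Finset.mem_sdiff, Finset.mem_union] at h ⊢
        tauto
      rw [MGraph.restr_mem_eq h, MGraph.restr_mem_eq h2, MGraph.restr_mem_eq h1]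
    · rw [MGraph.restr_not_mem_eq h]
      by_cases h2 : e ∈ (G.contract S₀).E \ (T₀ ∪ (S \ S₀))
      · exfalso
        apply h
        rw [MGraph.contract_E] at h2
        simp only [Finset.mem_sdiff, Finset.mem_union] at h2 ⊢
        tauto
      · rw [MGraph.restr_not_mem_eq h2]
  · -- (c) divisor pushforward
    exact G.divOr_push S₀ b hb S hS O hO hS₀ hbi
  · -- (d) equivalence is preserved
    intro O' hO' hbi' hequiv
    refine ⟨G.orient_push S₀ hO'.1, hOrient, ?_⟩
    have hp := G.divOr_push S₀ b hb S hS O hO hS₀ hbi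
    have hp' := G.divOr_push S₀ b hb S hS O' hO' hS₀ hbi'
    funext v
    have e1 := congrFun hp v
    have e2 := congrFun hp' v
    rw [hequiv.2.2] at e2
    have := e1.symm.trans e2
    omega
  · -- (e) order is preserved
    intro T OT hTS hOT hrestr
    refine ⟨fun e he => ?_, ?_⟩
    · simp only [Finset.mem_sdiff] at he ⊢
      exact ⟨hTS he.1, he.2⟩
    · funext e
      by_cases h : e ∈ G.E \ (S₀ ∪ S)
      · have hH : e ∈ (G.contract S₀).E \ (S \ S₀) := by rw [hHsd]; exact h
        have hT' : e ∈ G.E \ (S₀ ∪ T) := by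
          simp only [Finset.mem_sdiff, Finset.mem_union] at h ⊢
          push_neg at h ⊢
          exact ⟨h.1, h.2.1, fun ht => h.2.2 (hTS ht)⟩
        have hES : e ∈ G.E \ S := hDsub e h
        rw [MGraph.restr_mem_eq hH, MGraph.restr_mem_eq hT', MGraph.restr_mem_eq h, ← hrestr, MGraph.restr_mem_eq hES]
      · have hH : e ∉ (G.contract S₀).E \ (S \ S₀) := by rw [hHsd]; exact h
        rw [MGraph.restr_not_mem_eq hH, MGraph.restr_not_mem_eq h]
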